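/- For every c > 0 there exists a unique ȳ(c) > 0 with ξ(ȳ(c)) = c; moreover lim_{c → 0⁺} ȳ(c) = 0 and lim_{c → 0⁺} ȳ(c)/c^{1/4} = (12/(k₂ θ²))^{1/4}. -/

import Mathlib

open Real Filter Set Topology

/-- tanh-like fraction. -/
lemma frac_eq (t : ℝ) (ht : t ≠ 0) :
    (Real.exp (2*t) + Real.exp (-(2*t)) - 2) / (Real.exp (2*t) - Real.exp (-(2*t)))
      = Real.sinh t / Real.cosh t := by
  have hs : Real.sinh t ≠ 0 := Real.sinh_ne_zero.2 ht
  have hc : Real.cosh t ≠ 0 := (Real.cosh_pos t).ne'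
  have h1 : Real.exp (2*t) + Real.exp (-(2*t)) - 2 = 2 * (Real.cosh (2*t) - 1) := by
    rw [Real.cosh_eq]; ring
  have h2 : Real.exp (2*t) - Real.exp (-(2*t)) = 2 * Real.sinh (2*t) := by
    rw [Real.sinh_eq]; ring
  have h3 : Real.cosh (2*t) - 1 = 2 * Real.sinh t ^ 2 := by
    rw [Real.cosh_two_mul, Real.cosh_sq]; ring
  rw [h1, h2, h3, Real.sinh_two_mul]
  field_simp

/-- `ξ(y) = k₂ y² − (2k₂/θ) ((e^{θy}+e^{−θy}−2)/(e^{θy}−e^{−θy})) y`. -/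
noncomputable def xiFun (θ k₂ y : ℝ) : ℝ :=
  k₂ * y ^ 2 -
    (2 * k₂ / θ) *
      ((Real.exp (θ * y) + Real.exp (-(θ * y)) - 2) /
        (Real.exp (θ * y) - Real.exp (-(θ * y)))) * y

lemma xiFun_eq (θ k₂ : ℝ) (hθ : 0 < θ) (y : ℝ) (hy : 0 < y) :
    xiFun θ k₂ y = k₂ * y * (y - (2/θ) * (Real.sinh (θ*y/2) / Real.cosh (θ*y/2))) := by
  have ht : θ*y/2 ≠ 0 := by positivity
  have e1 : θ * y = 2 * (θ*y/2) := by ring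
  rw [xiFun, e1, frac_eq _ ht]
  ring_nf

/-- t ↦ t - tanh t derivative facts. -/
lemma hasDerivAt_sub_tanh (t : ℝ) :
    HasDerivAt (fun t => t - Real.sinh t / Real.cosh t) (Real.sinh t ^ 2 / Real.cosh t ^ 2) t := by
  have hc : Real.cosh t ≠ 0 := (Real.cosh_pos t).ne'
  have h := (hasDerivAt_id t).sub
    (((Real.hasDerivAt_sinh t).div (Real.hasDerivAt_cosh t) hc))
  refine HasDerivAt.congr_deriv h ?_
  have h1 : Real.cosh t ^ 2 - Real.sinh t ^ 2 = 1 := Real.cosh_sq_sub_sinh_sq t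
  field_simp
  nlinarith [h1]

lemma sub_tanh_strictMono : StrictMonoOn (fun t => t - Real.sinh t / Real.cosh t) (Ici 0) := by
  apply strictMonoOn_of_deriv_pos (convex_Ici 0)
  · exact (continuous_id.sub (Real.continuous_sinh.div Real.continuous_cosh
      fun x => (Real.cosh_pos x).ne')).continuousOn
  · intro x hx
    rw [interior_Ici, mem_Ioi] at hx
    rw [(hasDerivAt_sub_tanh x).deriv]
    have hs : Real.sinh x ≠ 0 := Real.sinh_ne_zero.2 hx.ne'
    positivity

lemma sub_tanh_pos {t : ℝ} (ht : 0 < t) : 0 < t - Real.sinh t / Real.cosh t := by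
  have := sub_tanh_strictMono (self_mem_Ici) (le_of_lt ht) ht
  simpa using this

lemma tanh_le_one (t : ℝ) : Real.sinh t / Real.cosh t ≤ 1 := by
  rw [div_le_one (Real.cosh_pos t)]
  nlinarith [Real.cosh_sq_sub_sinh_sq t, Real.cosh_pos t, Real.one_le_cosh t]

noncomputable def h₂ (θ y : ℝ) : ℝ := y - (2/θ) * (Real.sinh (θ*y/2) / Real.cosh (θ*y/2))

lemma xiFun_eq' {θ k₂ : ℝ} (hθ : 0 < θ) (y : ℝ) (hy : 0 < y) :
    xiFun θ k₂ y = k₂ * y * h₂ θ y :=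
  xiFun_eq θ k₂ hθ y hy

lemma h₂_eq {θ : ℝ} (hθ : 0 < θ) (y : ℝ) :
    h₂ θ y = (2/θ) * (θ*y/2 - Real.sinh (θ*y/2) / Real.cosh (θ*y/2)) := by
  rw [h₂]
  have : θ ≠ 0 := hθ.ne'
  field_simp

lemma h₂_pos {θ : ℝ} (hθ : 0 < θ) {y : ℝ} (hy : 0 < y) : 0 < h₂ θ y := by
  rw [h₂_eq hθ]
  have h1 : 0 < θ*y/2 := by positivity
  have := sub_tanh_pos h1
  positivity

lemma h₂_mono {θ : ℝ} (hθ : 0 < θ) {a b : ℝ} (ha : 0 ≤ a) (hab : a < b) :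
    h₂ θ a < h₂ θ b := by
  rw [h₂_eq hθ, h₂_eq hθ]
  have h2θ : 0 < 2/θ := by positivity
  apply (mul_lt_mul_iff_right₀ h2θ).2
  have hb : (0:ℝ) ≤ θ*b/2 := by nlinarith
  apply sub_tanh_strictMono (mem_Ici.2 (by positivity)) (mem_Ici.2 hb)
  nlinarith

lemma h₂_le {θ : ℝ} (hθ : 0 < θ) (y : ℝ) (hy : 0 ≤ y) : h₂ θ y ≤ y := by
  rw [h₂]
  have h1 : 0 ≤ Real.sinh (θ*y/2) / Real.cosh (θ*y/2) := by
    apply div_nonneg _ (Real.cosh_pos _).le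
    rw [Real.sinh_nonneg_iff]; positivity
  have h2θ : 0 < 2/θ := by positivity
  nlinarith

lemma xi_mono {θ k₂ : ℝ} (hθ : 0 < θ) (hk : 0 < k₂) {a b : ℝ} (ha : 0 < a) (hab : a < b) :
    xiFun θ k₂ a < xiFun θ k₂ b := by
  rw [xiFun_eq' hθ a ha, xiFun_eq' hθ b (ha.trans hab)]
  have h1 := h₂_pos hθ ha
  have h2 := h₂_mono hθ ha.le hab
  have h3 : k₂ * a < k₂ * b := by nlinarith
  exact mul_lt_mul h3 h2.le h1 (by nlinarith)

lemma xi_continuousOn {θ k₂ : ℝ} (hθ : 0 < θ) : ContinuousOn (xiFun θ k₂) (Ioi 0) := by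
  have : Continuous (fun y => k₂ * y * h₂ θ y) := by
    unfold h₂
    exact (continuous_const.mul continuous_id).mul (continuous_id.sub (continuous_const.mul
      ((Real.continuous_sinh.comp (by continuity)).div
        (Real.continuous_cosh.comp (by continuity)) fun x => (Real.cosh_pos _).ne')))
  exact this.continuousOn.congr fun y hy => xiFun_eq' hθ y hy

lemma xi_pos {θ k₂ : ℝ} (hθ : 0 < θ) (hk : 0 < k₂) {y : ℝ} (hy : 0 < y) :
    0 < xiFun θ k₂ y := by
  rw [xiFun_eq' hθ y hy]
  have := h₂_pos hθ hy
  positivity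

lemma xi_le {θ k₂ : ℝ} (hθ : 0 < θ) (hk : 0 < k₂) {y : ℝ} (hy : 0 < y) :
    xiFun θ k₂ y ≤ k₂ * y ^ 2 := by
  rw [xiFun_eq' hθ y hy]
  have h := h₂_le hθ y hy.le
  have := mul_le_mul_of_nonneg_left h (by positivity : (0:ℝ) ≤ k₂ * y)
  nlinarith

lemma xi_ge {θ k₂ : ℝ} (hθ : 0 < θ) (hk : 0 < k₂) {y : ℝ} (hy : 0 < y) :
    k₂ * y * (y - 2/θ) ≤ xiFun θ k₂ y := by
  rw [xiFun_eq' hθ y hy, h₂]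
  have h1 : Real.sinh (θ*y/2) / Real.cosh (θ*y/2) ≤ 1 := tanh_le_one _
  have h2 : 0 < 2/θ := by positivity
  have h3 : y - 2/θ ≤ y - 2/θ * (Real.sinh (θ*y/2) / Real.cosh (θ*y/2)) := by nlinarith
  have := mul_le_mul_of_nonneg_left h3 (by positivity : (0:ℝ) ≤ k₂ * y)
  linarith

lemma xi_exists_unique {θ k₂ : ℝ} (hθ : 0 < θ) (hk : 0 < k₂) {c : ℝ} (hc : 0 < c) :
    ∃! y : ℝ, 0 < y ∧ xiFun θ k₂ y = c := by
  -- small point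
  set a : ℝ := min 1 (Real.sqrt (c / (2*k₂))) with ha_def
  have ha0 : 0 < a := lt_min one_pos (Real.sqrt_pos.2 (by positivity))
  have hac : xiFun θ k₂ a < c := by
    have h1 : xiFun θ k₂ a ≤ k₂ * a ^ 2 := xi_le hθ hk ha0
    have h2 : a ≤ Real.sqrt (c / (2*k₂)) := min_le_right _ _
    have h3 : a ^ 2 ≤ c / (2*k₂) := by
      have := Real.sq_sqrt (le_of_lt (by positivity : (0:ℝ) < c / (2*k₂)))
      nlinarith [ha0.le]
    have h4 : k₂ * (c/(2*k₂)) = c/2 := by field_simp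
    have h5 := mul_le_mul_of_nonneg_left h3 hk.le
    linarith
  -- big point
  set b : ℝ := max a (2/θ + max 1 (c/k₂)) with hb_def
  have hab : a ≤ b := le_max_left _ _
  have hb1 : 2/θ + max 1 (c/k₂) ≤ b := le_max_right _ _
  have hbM : (1:ℝ) ≤ max 1 (c/k₂) := le_max_left _ _
  have hb0 : 0 < b := lt_of_lt_of_le ha0 hab
  have hbc : c ≤ xiFun θ k₂ b := by
    have h1 := xi_ge hθ hk hb0
    have h2 : max 1 (c/k₂) ≤ b - 2/θ := by
      have : 0 < 2/θ := by positivity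
      linarith
    have hck : c / k₂ ≤ max 1 (c/k₂) := le_max_right _ _
    have hb1' : 1 ≤ b := by
      have : 0 < 2/θ := by positivity
      linarith
    have : c ≤ k₂ * b * (b - 2/θ) := by
      have e1 : c = k₂ * 1 * (c / k₂) := by field_simp
      rw [e1]
      apply mul_le_mul _ (hck.trans h2) (by positivity) (by positivity)
      nlinarith
    linarith
  -- IVT
  have hsub : Icc a b ⊆ Ioi (0:ℝ) := fun x hx => lt_of_lt_of_le ha0 hx.1
  have hcont : ContinuousOn (xiFun θ k₂) (Icc a b) := (xi_continuousOn hθ).mono hsub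
  have := intermediate_value_Icc hab hcont
  have hc_mem : c ∈ Icc (xiFun θ k₂ a) (xiFun θ k₂ b) := ⟨hac.le, hbc⟩
  obtain ⟨y, hy_mem, hy_eq⟩ := this hc_mem
  refine ⟨y, ⟨lt_of_lt_of_le ha0 hy_mem.1, hy_eq⟩, ?_⟩
  rintro z ⟨hz0, hz_eq⟩
  by_contra hne
  rcases lt_or_gt_of_ne hne with h | h
  · have := xi_mono hθ hk hz0 h
    rw [hz_eq, hy_eq] at this; exact lt_irrefl c this
  · have := xi_mono hθ hk (lt_of_lt_of_le ha0 hy_mem.1) h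
    rw [hz_eq, hy_eq] at this; exact lt_irrefl c this

lemma sinh_div_self_tendsto : Tendsto (fun t => Real.sinh t / t) (𝓝[>] (0:ℝ)) (𝓝 1) := by
  have h := Real.hasDerivAt_sinh 0
  rw [hasDerivAt_iff_tendsto_slope] at h
  have h2 : Tendsto (slope Real.sinh 0) (𝓝[>] (0:ℝ)) (𝓝 (Real.cosh 0)) :=
    h.mono_left (nhdsWithin_mono 0 fun x hx => ne_of_gt hx)
  rw [Real.cosh_zero] at h2
  refine h2.congr fun t => ?_
  simp [slope_def_field]

lemma key_limit : Tendsto (fun t => (t - Real.sinh t / Real.cosh t) / t^3) (𝓝[>] (0:ℝ))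
    (𝓝 (1/3)) := by
  have hcont : Continuous (fun t => t - Real.sinh t / Real.cosh t) :=
    continuous_id.sub (Real.continuous_sinh.div Real.continuous_cosh
      fun x => (Real.cosh_pos x).ne')
  apply HasDerivAt.lhopital_zero_nhdsGT
    (f' := fun t => Real.sinh t ^ 2 / Real.cosh t ^ 2) (g' := fun t => 3 * t^2)
  · exact Eventually.of_forall fun t => hasDerivAt_sub_tanh t
  · exact Eventually.of_forall fun t => by
      simpa using hasDerivAt_pow 3 t
  · filter_upwards [self_mem_nhdsWithin] with t (ht : 0 < t)
    positivity
  · have : Tendsto (fun t => t - Real.sinh t / Real.cosh t) (𝓝 (0:ℝ)) (𝓝 0) := by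
      have := hcont.tendsto 0
      simpa using this
    exact this.mono_left nhdsWithin_le_nhds
  · have : Tendsto (fun t : ℝ => t^3) (𝓝 (0:ℝ)) (𝓝 0) := by
      simpa using (continuous_pow 3).tendsto (0:ℝ)
    exact this.mono_left nhdsWithin_le_nhds
  · -- f'/g' → 1/3
    have hc : Tendsto (fun t => 3 * Real.cosh t ^ 2) (𝓝[>] (0:ℝ)) (𝓝 3) := by
      have : Continuous (fun t => 3 * Real.cosh t ^ 2) := by continuity
      have h := this.tendsto 0
      simp only [Real.cosh_zero, one_pow, mul_one] at h
      exact h.mono_left nhdsWithin_le_nhds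
    have hmain : Tendsto (fun t => (Real.sinh t / t)^2 / (3 * Real.cosh t ^ 2))
        (𝓝[>] (0:ℝ)) (𝓝 (1/3)) := by
      have := (sinh_div_self_tendsto.pow 2).div hc (by norm_num)
      simpa [Pi.div_def] using this
    refine hmain.congr' ?_
    filter_upwards [self_mem_nhdsWithin] with t (ht : 0 < t)
    have hc0 : Real.cosh t ≠ 0 := (Real.cosh_pos t).ne'
    field_simp


lemma xi_div_y4_tendsto {θ k₂ : ℝ} (hθ : 0 < θ) (hk : 0 < k₂) :
    Tendsto (fun y => xiFun θ k₂ y / y^4) (𝓝[>] (0:ℝ)) (𝓝 (k₂ * θ^2 / 12)) := by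
  have hmap : Tendsto (fun y : ℝ => θ*y/2) (𝓝[>] (0:ℝ)) (𝓝[>] (0:ℝ)) := by
    apply tendsto_nhdsWithin_of_tendsto_nhds_of_eventually_within
    · have h : Continuous (fun y : ℝ => θ*y/2) := by continuity
      have := (h.tendsto 0).mono_left (nhdsWithin_le_nhds (s := Ioi (0:ℝ)))
      simpa using this
    · filter_upwards [self_mem_nhdsWithin] with y (hy : 0 < y)
      exact mem_Ioi.2 (by positivity)
  have hcomp := key_limit.comp hmap
  have hmul := hcomp.const_mul (k₂ * θ^2 / 4)
  have heq : (k₂ * θ^2 / 4) * (1/3) = k₂ * θ^2 / 12 := by ring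
  rw [heq] at hmul
  refine hmul.congr' ?_
  filter_upwards [self_mem_nhdsWithin] with y (hy : 0 < y)
  show (k₂ * θ^2 / 4) * ((θ*y/2 - Real.sinh (θ*y/2) / Real.cosh (θ*y/2)) / (θ*y/2)^3)
      = xiFun θ k₂ y / y^4
  rw [xiFun_eq' hθ y hy, h₂_eq hθ]
  have h1 : Real.cosh (θ*y/2) ≠ 0 := (Real.cosh_pos _).ne'
  have h2 : y ≠ 0 := hy.ne'
  have h3 : θ ≠ 0 := hθ.ne'
  field_simp
  ring

lemma rpow_helper {y c : ℝ} (hy : 0 < y) (hc : 0 < c) :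
    (c / y^4) ^ (-(1/4) : ℝ) = y / c ^ ((1:ℝ)/4) := by
  have h4 : (0:ℝ) ≤ c / y^4 := by positivity
  rw [Real.rpow_neg h4, ← Real.inv_rpow h4, inv_div,
    Real.div_rpow (by positivity) hc.le, ← Real.rpow_natCast y 4, ← Real.rpow_mul hy.le]
  norm_num

lemma rpow_helper2 {L : ℝ} (hL : 0 < L) : L ^ (-(1/4):ℝ) = L⁻¹ ^ ((1:ℝ)/4) := by
  rw [Real.rpow_neg hL.le, ← Real.inv_rpow hL.le]

theorem stmt_8 (θ k₂ : ℝ) (hθ : 0 < θ) (hk : 0 < k₂) :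
    (∀ c : ℝ, 0 < c → ∃! y : ℝ, 0 < y ∧ xiFun θ k₂ y = c) ∧
    ∀ ybar : ℝ → ℝ, (∀ c : ℝ, 0 < c → 0 < ybar c ∧ xiFun θ k₂ (ybar c) = c) →
      Filter.Tendsto ybar (nhdsWithin 0 (Set.Ioi 0)) (nhds 0) ∧
      Filter.Tendsto (fun c => ybar c / c ^ ((1 : ℝ) / 4)) (nhdsWithin 0 (Set.Ioi 0))
        (nhds ((12 / (k₂ * θ ^ 2)) ^ ((1 : ℝ) / 4))) := by
  constructor
  · exact fun c hc => xi_exists_unique hθ hk hc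
  intro ybar hybar
  have htend0 : Tendsto ybar (𝓝[>] (0:ℝ)) (𝓝 0) := by
    rw [tendsto_order]
    constructor
    · intro a ha
      filter_upwards [self_mem_nhdsWithin] with c (hc : 0 < c)
      exact lt_trans ha (hybar c hc).1
    · intro ε hε
      set ε' := min ε 1 with hε'_def
      have hε' : 0 < ε' := lt_min hε one_pos
      have hδ : 0 < xiFun θ k₂ ε' := xi_pos hθ hk hε'
      have hmem : Ioo (0:ℝ) (xiFun θ k₂ ε') ∈ 𝓝[>] (0:ℝ) :=
        Ioo_mem_nhdsGT_of_mem ⟨le_refl 0, hδ⟩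
      filter_upwards [hmem] with c hc
      obtain ⟨hc0, hcδ⟩ := hc
      obtain ⟨hy0, hyeq⟩ := hybar c hc0
      have hlt : ybar c < ε' := by
        by_contra hle
        push_neg at hle
        rcases eq_or_lt_of_le hle with heq | hgt
        · rw [← heq] at hyeq; linarith
        · have := xi_mono hθ hk hε' hgt
          rw [hyeq] at this; linarith
      exact lt_of_lt_of_le hlt (min_le_left ε 1)
  refine ⟨htend0, ?_⟩
  have hy_in : Tendsto ybar (𝓝[>] (0:ℝ)) (𝓝[>] (0:ℝ)) := by
    apply tendsto_nhdsWithin_of_tendsto_nhds_of_eventually_within _ htend0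
    filter_upwards [self_mem_nhdsWithin] with c (hc : 0 < c)
    exact mem_Ioi.2 (hybar c hc).1
  have hA := (xi_div_y4_tendsto hθ hk).comp hy_in
  have hB : Tendsto (fun c => c / (ybar c)^4) (𝓝[>] (0:ℝ)) (𝓝 (k₂ * θ^2 / 12)) := by
    refine hA.congr' ?_
    filter_upwards [self_mem_nhdsWithin] with c (hc : 0 < c)
    show xiFun θ k₂ (ybar c) / (ybar c)^4 = c / (ybar c)^4
    rw [(hybar c hc).2]
  have hL : (0:ℝ) < k₂ * θ^2 / 12 := by positivity
  have hrpow : Tendsto (fun c => (c / (ybar c)^4) ^ (-(1/4) : ℝ)) (𝓝[>] (0:ℝ))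
      (𝓝 ((k₂ * θ^2 / 12) ^ (-(1/4):ℝ))) := by
    have hcont : ContinuousAt (fun x : ℝ => x ^ (-(1/4):ℝ)) (k₂ * θ^2 / 12) :=
      Real.continuousAt_rpow_const _ _ (Or.inl hL.ne')
    exact hcont.tendsto.comp hB
  have hval : (k₂ * θ^2 / 12 : ℝ) ^ (-(1/4):ℝ) = (12 / (k₂ * θ^2)) ^ ((1:ℝ)/4) := by
    rw [rpow_helper2 hL]
    congr 1
    field_simp
  rw [hval] at hrpow
  refine hrpow.congr' ?_
  filter_upwards [self_mem_nhdsWithin] with c (hc : 0 < c)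
  exact rpow_helper (hybar c hc).1 hc
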